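/- A net of quadrics Λ in the variables a,b,c,d,e is ρ4-unstable, where ρ4=(4,-1,-1,-1,-1), if and only if Λ ⊆ (b,c,d,e) (no element of Λ has an a² term, i.e. every element of the net vanishes at the point O=[1:0:0:0:0]) and dim(Λ ∩ (b,c,d,e)²) ≥ 2 (a pencil of Λ is singular at O). -/

import Mathlib

open MvPolynomial

set_option maxHeartbeats 1000000
set_option synthInstance.maxHeartbeats 400000

/-- The space of polynomials in the five variables `a,b,c,d,e` (indexed `0,…,4`). -/
abbrev Quin : Type := MvPolynomial (Fin 5) ℂ

/-- `m` is (the exponent vector of) a quadratic monomial. -/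
def QuadMon (m : Fin 5 →₀ ℕ) : Prop := (m.sum fun _ n => n) = 2

/-- A net of quadrics: a 3-dimensional space of quadratic forms. -/
def IsNet (Λ : Submodule ℂ Quin) : Prop :=
  Module.finrank ℂ Λ = 3 ∧ ∀ Q ∈ Λ, MvPolynomial.IsHomogeneous Q 2

/-- The `ρ`-weight of a monomial. -/
def wt (ρ : Fin 5 → ℤ) (m : Fin 5 →₀ ℕ) : ℤ := ∑ i, (m i : ℤ) * ρ i

/-- `Λ` is semistable with respect to the weight vector `ρ`: there are three distinct
quadratic monomials with total `ρ`-weight `≥ 0` such that the corresponding coefficient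
map `Λ → ℂ³` is bijective. -/
def SemistableWrt (Λ : Submodule ℂ Quin) (ρ : Fin 5 → ℤ) : Prop :=
  ∃ m1 m2 m3 : Fin 5 →₀ ℕ, m1 ≠ m2 ∧ m1 ≠ m3 ∧ m2 ≠ m3 ∧
    QuadMon m1 ∧ QuadMon m2 ∧ QuadMon m3 ∧
    0 ≤ wt ρ m1 + wt ρ m2 + wt ρ m3 ∧
    Function.Bijective (fun Q : Λ =>
      (![MvPolynomial.coeff m1 (Q : Quin), MvPolynomial.coeff m2 (Q : Quin),
         MvPolynomial.coeff m3 (Q : Quin)] : Fin 3 → ℂ))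

/-- The twelve distinguished weight vectors `ρ1,…,ρ12`. -/
def rho : Fin 12 → Fin 5 → ℤ :=
  ![![1,1,1,1,-4], ![2,2,2,-3,-3], ![3,3,-2,-2,-2], ![4,-1,-1,-1,-1],
    ![3,3,3,-2,-7], ![4,4,-1,-1,-6], ![9,4,-1,-6,-6], ![7,2,2,-3,-8],
    ![12,7,2,-8,-13], ![9,4,-1,-1,-11], ![14,4,-1,-6,-11], ![13,8,3,-7,-17]]

/-- A normalized weight vector: nonincreasing, sums to zero and not identically zero. -/
def IsNormalized (ρ : Fin 5 → ℤ) : Prop :=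
  (∀ i j : Fin 5, i ≤ j → ρ j ≤ ρ i) ∧ (∑ i, ρ i) = 0 ∧ ρ ≠ 0

/-- Linear substitution of variables by the matrix `g`, as a linear map on polynomials. -/
noncomputable def substMap (g : Matrix (Fin 5) (Fin 5) ℂ) : Quin →ₗ[ℂ] Quin :=
  (MvPolynomial.aeval fun i => ∑ j, MvPolynomial.C (g i j) * MvPolynomial.X j).toLinearMap

/-- Semistability of a net (Hilbert–Mumford criterion for `SL(5)`). -/
def Semistable (Λ : Submodule ℂ Quin) : Prop :=
  ∀ (g : Matrix.GeneralLinearGroup (Fin 5) ℂ) (ρ : Fin 5 → ℤ), IsNormalized ρ →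
    SemistableWrt (Submodule.map (substMap (g : Matrix (Fin 5) (Fin 5) ℂ)) Λ) ρ

/-- The symmetric matrix of a quadratic form. -/
noncomputable def quadMatrix (Q : Quin) : Matrix (Fin 5) (Fin 5) ℂ :=
  Matrix.of fun i j =>
    if i = j then MvPolynomial.coeff (Finsupp.single i 2) Q
    else (1/2) * MvPolynomial.coeff (Finsupp.single i 1 + Finsupp.single j 1) Q

/-- The discriminant quintic `det (x·A1 + y·A2 + z·A3)` of a net with basis `Q1,Q2,Q3`. -/
noncomputable def netDisc (Q1 Q2 Q3 : Quin) : MvPolynomial (Fin 3) ℂ :=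
  Matrix.det (Matrix.of fun i j : Fin 5 =>
    MvPolynomial.C (quadMatrix Q1 i j) * MvPolynomial.X 0 +
    MvPolynomial.C (quadMatrix Q2 i j) * MvPolynomial.X 1 +
    MvPolynomial.C (quadMatrix Q3 i j) * MvPolynomial.X 2)

/-- The net lies on a smooth quartic del Pezzo surface. -/
def OnSmoothDelPezzo (Λ : Submodule ℂ Quin) : Prop :=
  ∃ P1 P2 : Quin, P1 ∈ Λ ∧ P2 ∈ Λ ∧ LinearIndependent ℂ ![P1, P2] ∧
    ∀ v : Fin 5 → ℂ, v ≠ 0 → MvPolynomial.eval v P1 = 0 → MvPolynomial.eval v P2 = 0 →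
      LinearIndependent ℂ
        ![fun i => MvPolynomial.eval v (MvPolynomial.pderiv i P1),
          fun i => MvPolynomial.eval v (MvPolynomial.pderiv i P2)]

/-- The span of the quadratic monomials whose exponent vectors satisfy `P`. -/
noncomputable def monSpan (P : (Fin 5 →₀ ℕ) → Prop) : Submodule ℂ Quin :=
  Submodule.span ℂ {Q : Quin | ∃ m : Fin 5 →₀ ℕ, QuadMon m ∧ P m ∧ Q = MvPolynomial.monomial m 1}

/-- `(b,c,d,e)`: span of the quadratic monomials divisible by `b`, `c`, `d` or `e`
(all quadratic monomials except `a²`). -/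
noncomputable def idealBCDE : Submodule ℂ Quin :=
  monSpan fun m => m 1 ≠ 0 ∨ m 2 ≠ 0 ∨ m 3 ≠ 0 ∨ m 4 ≠ 0

/-- `(b,c,d,e)²`: span of the quadratic monomials not involving `a`. -/
noncomputable def sqBCDE : Submodule ℂ Quin := monSpan fun m => m 0 = 0


section Rho4Aux

open Module

lemma quad_sum5 {m : Fin 5 →₀ ℕ} (hm : QuadMon m) :
    m 0 + m 1 + m 2 + m 3 + m 4 = 2 := by
  have h : (m.sum fun _ n => n) = ∑ i : Fin 5, m i :=
    Finsupp.sum_fintype _ _ (fun _ => rfl)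
  unfold QuadMon at hm
  rw [h, Fin.sum_univ_five] at hm
  exact hm

lemma quad_degree {m : Fin 5 →₀ ℕ} : QuadMon m ↔ Finsupp.degree m = 2 := Iff.rfl

lemma quad_of_coeff {Q : Quin} (hQ : Q.IsHomogeneous 2) {m : Fin 5 →₀ ℕ}
    (h : MvPolynomial.coeff m Q ≠ 0) : QuadMon m := by
  rw [quad_degree]
  by_contra hne
  exact h (hQ.coeff_eq_zero hne)

lemma sep {Q : Quin} (hQ : Q.IsHomogeneous 2) (hne : Q ≠ 0) :
    ∃ m, QuadMon m ∧ MvPolynomial.coeff m Q ≠ 0 := by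
  by_contra h
  push_neg at h
  apply hne
  ext m
  rw [coeff_zero]
  by_cases hq : QuadMon m
  · exact h m hq
  · exact hQ.coeff_eq_zero (by rwa [quad_degree] at hq)

lemma coeff_eq_zero_of_monSpan {P : (Fin 5 →₀ ℕ) → Prop} {m : Fin 5 →₀ ℕ}
    (h : ∀ m', QuadMon m' → P m' → m' ≠ m) {Q : Quin} (hQ : Q ∈ monSpan P) :
    MvPolynomial.coeff m Q = 0 := by
  have hle : monSpan P ≤ LinearMap.ker (lcoeff ℂ m) := by
    rw [monSpan, Submodule.span_le]
    rintro x ⟨m', hq, hp, rfl⟩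
    simp [LinearMap.mem_ker, lcoeff_apply, coeff_monomial, if_neg (h m' hq hp)]
  simpa [lcoeff_apply] using hle hQ

lemma mem_monSpan {P : (Fin 5 →₀ ℕ) → Prop} {Q : Quin} (hQ : Q.IsHomogeneous 2)
    (h : ∀ m, MvPolynomial.coeff m Q ≠ 0 → P m) : Q ∈ monSpan P := by
  rw [← Q.support_sum_monomial_coeff]
  refine Submodule.sum_mem _ fun m hm => ?_
  have hc : MvPolynomial.coeff m Q ≠ 0 := mem_support_iff.mp hm
  have hrw : (monomial m) (MvPolynomial.coeff m Q)
      = (MvPolynomial.coeff m Q) • ((monomial m) (1:ℂ)) := by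
    rw [smul_monomial, smul_eq_mul, mul_one]
  rw [hrw]
  exact Submodule.smul_mem _ _ (Submodule.subset_span ⟨m, quad_of_coeff hQ hc, h m hc, rfl⟩)

lemma coeff_a2_eq_zero {Q : Quin} (hQ : Q ∈ idealBCDE) :
    MvPolynomial.coeff (Finsupp.single 0 2) Q = 0 := by
  refine coeff_eq_zero_of_monSpan (fun m' _ hp heq => ?_) hQ
  subst heq
  simp [Finsupp.single_apply] at hp

lemma quadMon_single02 : QuadMon (Finsupp.single (0 : Fin 5) 2) := by
  unfold QuadMon
  simp [Finsupp.sum_single_index]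

lemma eq_single02 {m : Fin 5 →₀ ℕ} (hm : QuadMon m) (h0 : m 0 = 2) :
    m = Finsupp.single 0 2 := by
  have h5 := quad_sum5 hm
  ext i
  fin_cases i <;> simp [Finsupp.single_apply] <;> omega

lemma mem_idealBCDE_iff {Q : Quin} (hQ : Q.IsHomogeneous 2) :
    Q ∈ idealBCDE ↔ MvPolynomial.coeff (Finsupp.single 0 2) Q = 0 := by
  constructor
  · exact coeff_a2_eq_zero
  · intro h
    refine mem_monSpan hQ fun m hc => ?_
    by_contra hp
    push_neg at hp
    obtain ⟨h1, h2, h3, h4⟩ := hp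
    have h5 := quad_sum5 (quad_of_coeff hQ hc)
    have hm : m = Finsupp.single 0 2 := eq_single02 (quad_of_coeff hQ hc) (by omega)
    rw [hm] at hc
    exact hc h

lemma coeff_sq_eq_zero {Q : Quin} (hQ : Q ∈ sqBCDE) {m : Fin 5 →₀ ℕ} (hm : m 0 ≠ 0) :
    MvPolynomial.coeff m Q = 0 :=
  coeff_eq_zero_of_monSpan (fun m' _ hp heq => hm (by rw [← heq]; exact hp)) hQ

lemma mem_sqBCDE_iff {Q : Quin} (hQ : Q.IsHomogeneous 2) :
    Q ∈ sqBCDE ↔ ∀ m : Fin 5 →₀ ℕ, m 0 ≠ 0 → MvPolynomial.coeff m Q = 0 := by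
  constructor
  · exact fun h m hm => coeff_sq_eq_zero h hm
  · intro h
    refine mem_monSpan hQ fun m hc => ?_
    by_contra hm
    exact hc (h m hm)

lemma wt_rho3 {m : Fin 5 →₀ ℕ} (hm : QuadMon m) :
    wt (rho 3) m = 5 * (m 0 : ℤ) - 2 := by
  have h5 := quad_sum5 hm
  have r0 : rho 3 0 = 4 := rfl
  have r1 : rho 3 1 = -1 := rfl
  have r2 : rho 3 2 = -1 := rfl
  have r3 : rho 3 3 = -1 := rfl
  have r4 : rho 3 4 = -1 := rfl
  unfold wt
  rw [Fin.sum_univ_five, r0, r1, r2, r3, r4]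
  omega

/-- The coefficient functional restricted to a submodule. -/
noncomputable def restrF (Λ : Submodule ℂ Quin) (m : Fin 5 →₀ ℕ) : ↥Λ →ₗ[ℂ] ℂ :=
  (lcoeff ℂ m).comp Λ.subtype

lemma ker_restr_big (Λ : Submodule ℂ Quin) (hdim : finrank ℂ Λ = 3)
    [FiniteDimensional ℂ ↥Λ] (m : Fin 5 →₀ ℕ) :
    2 ≤ finrank ℂ ↥(LinearMap.ker (restrF Λ m)) := by
  have h := LinearMap.finrank_range_add_finrank_ker (restrF Λ m)
  have h2 : finrank ℂ ↥(LinearMap.range (restrF Λ m)) ≤ 1 := by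
    have := Submodule.finrank_le (LinearMap.range (restrF Λ m))
    rwa [Module.finrank_self] at this
  omega

/-- Triple coefficient map as a linear map. -/
noncomputable def tripleMap (Λ : Submodule ℂ Quin) (m1 m2 m3 : Fin 5 →₀ ℕ) :
    ↥Λ →ₗ[ℂ] (Fin 3 → ℂ) :=
  LinearMap.pi ![restrF Λ m1, restrF Λ m2, restrF Λ m3]

lemma tripleMap_eq (Λ : Submodule ℂ Quin) (m1 m2 m3 : Fin 5 →₀ ℕ) :
    (fun Q : Λ =>
      (![MvPolynomial.coeff m1 (Q : Quin), MvPolynomial.coeff m2 (Q : Quin),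
         MvPolynomial.coeff m3 (Q : Quin)] : Fin 3 → ℂ)) = ⇑(tripleMap Λ m1 m2 m3) := by
  funext Q i
  fin_cases i <;> rfl

lemma semistable_of_pair (Λ : Submodule ℂ Quin) (hΛ : IsNet Λ)
    {m1 m2 : Fin 5 →₀ ℕ} (h12 : m1 ≠ m2) (hq1 : QuadMon m1) (hq2 : QuadMon m2)
    (hw : 2 ≤ wt (rho 3) m1 + wt (rho 3) m2)
    {v1 v2 : Quin} (hv1 : v1 ∈ Λ) (hv2 : v2 ∈ Λ)
    (h11 : MvPolynomial.coeff m1 v1 ≠ 0) (h21 : MvPolynomial.coeff m1 v2 = 0)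
    (h22 : MvPolynomial.coeff m2 v2 ≠ 0) :
    SemistableWrt Λ (rho 3) := by
  obtain ⟨hdim, hhom⟩ := hΛ
  haveI : FiniteDimensional ℂ ↥Λ :=
    FiniteDimensional.of_finrank_pos (by rw [hdim]; norm_num)
  set p : ↥Λ →ₗ[ℂ] (Fin 2 → ℂ) := LinearMap.pi ![restrF Λ m1, restrF Λ m2] with hp
  have hker : LinearMap.ker p ≠ ⊥ := by
    intro hbot
    have hinj : Function.Injective p := LinearMap.ker_eq_bot.mp hbot
    have hle := LinearMap.finrank_le_finrank_of_injective hinj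
    rw [hdim, Module.finrank_pi] at hle
    simp at hle
  obtain ⟨x, hx, hx0⟩ := Submodule.exists_mem_ne_zero_of_ne_bot hker
  have hv3 : (x : Quin) ∈ Λ := x.2
  have h31 : MvPolynomial.coeff m1 (x : Quin) = 0 := by
    have h := congrFun (LinearMap.mem_ker.mp hx) 0
    simpa [hp, restrF, LinearMap.pi_apply] using h
  have h32 : MvPolynomial.coeff m2 (x : Quin) = 0 := by
    have h := congrFun (LinearMap.mem_ker.mp hx) 1
    simpa [hp, restrF, LinearMap.pi_apply] using h
  have hv3ne : (x : Quin) ≠ 0 := fun h => hx0 (Subtype.ext h)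
  obtain ⟨m3, hq3, h33⟩ := sep (hhom _ hv3) hv3ne
  have h13 : m1 ≠ m3 := fun h => h33 (h ▸ h31)
  have h23 : m2 ≠ m3 := fun h => h33 (h ▸ h32)
  refine ⟨m1, m2, m3, h12, h13, h23, hq1, hq2, hq3, ?_, ?_⟩
  · have h3w := wt_rho3 hq3
    have : (0:ℤ) ≤ (m3 0 : ℤ) := Int.natCast_nonneg _
    omega
  · rw [tripleMap_eq]
    have hsurj : Function.Surjective (tripleMap Λ m1 m2 m3) := by
      intro c
      set A := MvPolynomial.coeff m1 v1 with hA
      set B := MvPolynomial.coeff m2 v1 with hB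
      set C := MvPolynomial.coeff m3 v1 with hC
      set D := MvPolynomial.coeff m2 v2 with hD
      set E := MvPolynomial.coeff m3 v2 with hE
      set F := MvPolynomial.coeff m3 (x : Quin) with hF
      set α := c 0 / A with hα
      set β := (c 1 - α * B) / D with hβ
      set γ := (c 2 - α * C - β * E) / F with hγ
      refine ⟨⟨α • v1 + β • v2 + γ • (x : Quin), ?_⟩, ?_⟩
      · exact Submodule.add_mem _ (Submodule.add_mem _ (Submodule.smul_mem _ _ hv1)
          (Submodule.smul_mem _ _ hv2)) (Submodule.smul_mem _ _ hv3)
      · funext i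
        fin_cases i
        · show MvPolynomial.coeff m1 (α • v1 + β • v2 + γ • (x : Quin)) = c 0
          rw [coeff_add, coeff_add, coeff_smul, coeff_smul, coeff_smul,
            h21, h31, ← hA, hα]
          simp only [smul_eq_mul]
          field_simp
          ring
        · show MvPolynomial.coeff m2 (α • v1 + β • v2 + γ • (x : Quin)) = c 1
          rw [coeff_add, coeff_add, coeff_smul, coeff_smul, coeff_smul,
            h32, ← hB, ← hD, hβ]
          simp only [smul_eq_mul]
          field_simp
          ring
        · show MvPolynomial.coeff m3 (α • v1 + β • v2 + γ • (x : Quin)) = c 2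
          rw [coeff_add, coeff_add, coeff_smul, coeff_smul, coeff_smul,
            ← hC, ← hE, ← hF, hγ]
          simp only [smul_eq_mul]
          field_simp
          ring
    have hfr : finrank ℂ ↥Λ = finrank ℂ (Fin 3 → ℂ) := by
      rw [hdim, Module.finrank_pi]
      simp
    exact ⟨(LinearMap.injective_iff_surjective_of_finrank_eq_finrank hfr).mpr hsurj, hsurj⟩

lemma exists_in_inf (Λ : Submodule ℂ Quin) [FiniteDimensional ℂ ↥Λ]
    (h2 : 2 ≤ finrank ℂ ↥(Λ ⊓ sqBCDE)) (m : Fin 5 →₀ ℕ) :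
    ∃ Q : Quin, Q ∈ Λ ⊓ sqBCDE ∧ Q ≠ 0 ∧ MvPolynomial.coeff m Q = 0 := by
  haveI : FiniteDimensional ℂ ↥(Λ ⊓ sqBCDE) :=
    Submodule.finiteDimensional_of_le inf_le_left
  set f : ↥(Λ ⊓ sqBCDE) →ₗ[ℂ] ℂ := (lcoeff ℂ m).comp (Λ ⊓ sqBCDE).subtype with hf
  have hk : LinearMap.ker f ≠ ⊥ := by
    intro h
    have hinj := LinearMap.ker_eq_bot.mp h
    have hle := LinearMap.finrank_le_finrank_of_injective hinj
    rw [Module.finrank_self] at hle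
    omega
  obtain ⟨x, hx, hx0⟩ := Submodule.exists_mem_ne_zero_of_ne_bot hk
  refine ⟨x.1, x.2, fun h => hx0 (Subtype.ext h), ?_⟩
  have hx' := LinearMap.mem_ker.mp hx
  simpa [hf, lcoeff_apply] using hx'

end Rho4Aux

/-- Characterization of `ρ4`-unstable nets, `ρ4 = (4,-1,-1,-1,-1)`:
the net contains the point `O = [1:0:0:0:0]` and a pencil of the net is singular at `O`. -/
theorem rho4_unstable_iff (Λ : Submodule ℂ Quin) (hΛ : IsNet Λ) :
    ¬ SemistableWrt Λ (rho 3) ↔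
      (Λ ≤ idealBCDE ∧ 2 ≤ Module.finrank ℂ ↥(Λ ⊓ sqBCDE)) := by
  obtain ⟨hdim, hhom⟩ := hΛ
  haveI : FiniteDimensional ℂ ↥Λ :=
    FiniteDimensional.of_finrank_pos (by rw [hdim]; norm_num)
  constructor
  · -- unstable → conditions (contrapositive)
    intro hns
    by_contra hc
    apply hns
    rcases not_and_or.mp hc with hA | hB
    · -- Case A : Λ ⊄ idealBCDE
      rw [SetLike.le_def] at hA
      push_neg at hA
      obtain ⟨v1, hv1, hv1n⟩ := hA
      have h11 : MvPolynomial.coeff (Finsupp.single 0 2) v1 ≠ 0 :=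
        fun h => hv1n ((mem_idealBCDE_iff (hhom v1 hv1)).mpr h)
      have hker := ker_restr_big Λ hdim (Finsupp.single 0 2)
      have hne : LinearMap.ker (restrF Λ (Finsupp.single 0 2)) ≠ ⊥ := by
        intro h
        rw [h, finrank_bot] at hker
        omega
      obtain ⟨x, hx, hx0⟩ := Submodule.exists_mem_ne_zero_of_ne_bot hne
      have hv2 : (x : Quin) ∈ Λ := x.2
      have h21 : MvPolynomial.coeff (Finsupp.single 0 2) (x : Quin) = 0 := by
        have hx' := LinearMap.mem_ker.mp hx
        simpa [restrF, lcoeff_apply] using hx'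
      have hv2ne : (x : Quin) ≠ 0 := fun h => hx0 (Subtype.ext h)
      obtain ⟨m2, hq2, h22⟩ := sep (hhom _ hv2) hv2ne
      have h12 : Finsupp.single 0 2 ≠ m2 := fun h => h22 (h ▸ h21)
      refine semistable_of_pair Λ ⟨hdim, hhom⟩ h12 quadMon_single02 hq2 ?_ hv1 hv2 h11 h21 h22
      rw [wt_rho3 quadMon_single02, wt_rho3 hq2]
      have hs : (Finsupp.single (0:Fin 5) 2) 0 = 2 := Finsupp.single_eq_same
      rw [hs]
      have : (0:ℤ) ≤ (m2 0 : ℤ) := Int.natCast_nonneg _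
      omega
    · -- Case B : pencil small
      have hB1 : Module.finrank ℂ ↥(Λ ⊓ sqBCDE) ≤ 1 := by omega
      have hΛsq : ¬ (Λ ≤ sqBCDE) := by
        intro hle
        rw [inf_eq_left.mpr hle, hdim] at hB1
        omega
      rw [SetLike.le_def] at hΛsq
      push_neg at hΛsq
      obtain ⟨v1, hv1, hv1n⟩ := hΛsq
      have hex1 : ¬ ∀ m : Fin 5 →₀ ℕ, m 0 ≠ 0 → MvPolynomial.coeff m v1 = 0 :=
        fun h => hv1n ((mem_sqBCDE_iff (hhom _ hv1)).mpr h)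
      push_neg at hex1
      obtain ⟨m1, hm10, h11⟩ := hex1
      have hq1 : QuadMon m1 := quad_of_coeff (hhom _ hv1) h11
      have hker := ker_restr_big Λ hdim m1
      have hex : ∃ x : ↥(LinearMap.ker (restrF Λ m1)), ((x : ↥Λ) : Quin) ∉ sqBCDE := by
        by_contra hall
        push_neg at hall
        haveI : FiniteDimensional ℂ ↥(Λ ⊓ sqBCDE) :=
          Submodule.finiteDimensional_of_le inf_le_left
        let j : ↥(LinearMap.ker (restrF Λ m1)) →ₗ[ℂ] ↥(Λ ⊓ sqBCDE) :=
          LinearMap.codRestrict (Λ ⊓ sqBCDE)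
            (Λ.subtype.comp (LinearMap.ker (restrF Λ m1)).subtype)
            (fun x => ⟨(x : ↥Λ).2, hall x⟩)
        have hinj : Function.Injective j := by
          intro a b hab
          have h1 : ((a : ↥Λ) : Quin) = ((b : ↥Λ) : Quin) := congrArg (fun y : ↥(Λ ⊓ sqBCDE) => (y : Quin)) hab
          exact Subtype.ext (Subtype.ext h1)
        have hle := LinearMap.finrank_le_finrank_of_injective hinj
        omega
      obtain ⟨x, hxsq⟩ := hex
      have hv2 : ((x : ↥Λ) : Quin) ∈ Λ := (x : ↥Λ).2
      have h21 : MvPolynomial.coeff m1 ((x : ↥Λ) : Quin) = 0 := by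
        have hx' := LinearMap.mem_ker.mp x.2
        simp only [restrF, LinearMap.coe_comp, Function.comp_apply, lcoeff_apply,
          Submodule.coe_subtype] at hx'
        exact hx'
      have hex2 : ¬ ∀ m : Fin 5 →₀ ℕ, m 0 ≠ 0 → MvPolynomial.coeff m ((x : ↥Λ) : Quin) = 0 :=
        fun h => hxsq ((mem_sqBCDE_iff (hhom _ hv2)).mpr h)
      push_neg at hex2
      obtain ⟨m2, hm20, h22⟩ := hex2
      have hq2 : QuadMon m2 := quad_of_coeff (hhom _ hv2) h22
      have h12 : m1 ≠ m2 := fun h => h22 (h ▸ h21)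
      refine semistable_of_pair Λ ⟨hdim, hhom⟩ h12 hq1 hq2 ?_ hv1 hv2 h11 h21 h22
      rw [wt_rho3 hq1, wt_rho3 hq2]
      have hm10' : 1 ≤ m1 0 := Nat.one_le_iff_ne_zero.mpr hm10
      have hm20' : 1 ≤ m2 0 := Nat.one_le_iff_ne_zero.mpr hm20
      omega
  · -- conditions → unstable
    rintro ⟨hle, h2⟩ hS
    obtain ⟨m1, m2, m3, h12, h13, h23, hq1, hq2, hq3, hw, hbij⟩ := hS
    have hvan : ∀ Q ∈ Λ, MvPolynomial.coeff (Finsupp.single 0 2) Q = 0 :=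
      fun Q hQ => coeff_a2_eq_zero (hle hQ)
    have hn1 : m1 ≠ Finsupp.single 0 2 := by
      intro h
      obtain ⟨Q, hQ⟩ := hbij.2 (fun _ => 1)
      have h0 : MvPolynomial.coeff m1 (Q : Quin) = 1 := congrFun hQ 0
      rw [h, hvan _ Q.2] at h0
      exact zero_ne_one h0
    have hn2 : m2 ≠ Finsupp.single 0 2 := by
      intro h
      obtain ⟨Q, hQ⟩ := hbij.2 (fun _ => 1)
      have h0 : MvPolynomial.coeff m2 (Q : Quin) = 1 := congrFun hQ 1
      rw [h, hvan _ Q.2] at h0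
      exact zero_ne_one h0
    have hn3 : m3 ≠ Finsupp.single 0 2 := by
      intro h
      obtain ⟨Q, hQ⟩ := hbij.2 (fun _ => 1)
      have h0 : MvPolynomial.coeff m3 (Q : Quin) = 1 := congrFun hQ 2
      rw [h, hvan _ Q.2] at h0
      exact zero_ne_one h0
    have hb1 : m1 0 ≤ 1 := by
      have h5 := quad_sum5 hq1
      by_contra h
      exact hn1 (eq_single02 hq1 (by omega))
    have hb2 : m2 0 ≤ 1 := by
      have h5 := quad_sum5 hq2
      by_contra h
      exact hn2 (eq_single02 hq2 (by omega))
    have hb3 : m3 0 ≤ 1 := by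
      have h5 := quad_sum5 hq3
      by_contra h
      exact hn3 (eq_single02 hq3 (by omega))
    have hsum : 2 ≤ m1 0 + m2 0 + m3 0 := by
      rw [wt_rho3 hq1, wt_rho3 hq2, wt_rho3 hq3] at hw
      omega
    have hfind : ∃ Q : Quin, Q ∈ Λ ⊓ sqBCDE ∧ Q ≠ 0 ∧
        MvPolynomial.coeff m1 Q = 0 ∧ MvPolynomial.coeff m2 Q = 0 ∧
        MvPolynomial.coeff m3 Q = 0 := by
      by_cases h01 : m1 0 = 0
      · obtain ⟨Q, hQP, hQne, hc⟩ := exists_in_inf Λ h2 m1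
        exact ⟨Q, hQP, hQne, hc, coeff_sq_eq_zero hQP.2 (by omega),
          coeff_sq_eq_zero hQP.2 (by omega)⟩
      · by_cases h02 : m2 0 = 0
        · obtain ⟨Q, hQP, hQne, hc⟩ := exists_in_inf Λ h2 m2
          exact ⟨Q, hQP, hQne, coeff_sq_eq_zero hQP.2 (by omega), hc,
            coeff_sq_eq_zero hQP.2 (by omega)⟩
        · obtain ⟨Q, hQP, hQne, hc⟩ := exists_in_inf Λ h2 m3
          exact ⟨Q, hQP, hQne, coeff_sq_eq_zero hQP.2 (by omega),
            coeff_sq_eq_zero hQP.2 (by omega), hc⟩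
    obtain ⟨Q, hQP, hQne, hc1, hc2, hc3⟩ := hfind
    have heq0 : (⟨Q, hQP.1⟩ : ↥Λ) = 0 := by
      apply hbij.1
      funext i
      fin_cases i <;> simp [hc1, hc2, hc3]
    exact hQne (by simpa using congrArg Subtype.val heq0)
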